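/- Let G be a Gamma random variable with shape 1/2 and rate 1/2, i.e., with density g(x) = (1/√(2π)) x^{−1/2} e^{−x/2} on (0,∞). Then for every θ ≥ 0, E[exp(−θ²/(2G))] = exp(−θ), i.e., ∫₀^∞ exp(−θ²/(2x)) · (1/√(2π)) · x^{−1/2} · e^{−x/2} dx = e^{−θ}. -/

import Mathlib

open MeasureTheory Real Set

lemma gauss_integrableOn : IntegrableOn (fun x : ℝ => Real.exp (-(x^2)/2)) (Ioi 0) := by
  have : (fun x : ℝ => Real.exp (-(x^2)/2)) = fun x => Real.exp (-(1/2 : ℝ) * x^2) := by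
    funext x; ring_nf
  rw [this]
  exact (integrable_exp_neg_mul_sq (by norm_num)).integrableOn

lemma A_integrableOn (θ : ℝ) : IntegrableOn (fun x : ℝ => Real.exp (-(x - θ/x)^2/2)) (Ioi 0) := by
  apply Integrable.mono' (g := fun x => Real.exp θ * Real.exp (-(1/2:ℝ) * x^2))
    ((integrable_exp_neg_mul_sq (by norm_num : (0:ℝ) < 1/2)).const_mul _ |>.integrableOn)
  · apply ContinuousOn.aestronglyMeasurable ?_ measurableSet_Ioi
    apply Real.continuous_exp.comp_continuousOn
    apply ContinuousOn.div_const
    apply ContinuousOn.neg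
    apply ContinuousOn.pow
    exact continuousOn_id.sub (continuousOn_const.div continuousOn_id (fun x hx => ne_of_gt hx))
  · rw [ae_restrict_iff' measurableSet_Ioi]
    filter_upwards with x hx
    rw [Real.norm_eq_abs, abs_of_pos (Real.exp_pos _), ← Real.exp_add]
    apply Real.exp_le_exp.mpr
    have hx0 : x ≠ 0 := ne_of_gt hx
    have h1 : (x - θ/x)^2 ≥ x^2 - 2*θ := by
      have : (θ/x)^2 ≥ 0 := sq_nonneg _
      have hc : x * (θ/x) = θ := by field_simp
      nlinarith [sq_nonneg (θ/x)]
    nlinarith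

lemma inv_deriv (θ : ℝ) {x : ℝ} (hx : x ∈ Ioi (0:ℝ)) :
    HasDerivWithinAt (fun x => θ/x) (-(θ/x^2)) (Ioi 0) x := by
  have hx' : (0:ℝ) < x := hx
  have h1 : HasDerivAt (fun y : ℝ => θ * y⁻¹) (-(θ/x^2)) x := by
    have := (hasDerivAt_inv (ne_of_gt hx')).const_mul θ
    rw [show -(θ/x^2) = θ * -(x^2)⁻¹ by ring]
    exact this
  simpa [div_eq_mul_inv] using h1.hasDerivWithinAt

lemma inv_img (θ : ℝ) (hθ : 0 < θ) : (fun x : ℝ => θ/x) '' Ioi 0 = Ioi 0 := by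
  ext y; simp only [mem_image, mem_Ioi]
  constructor
  · rintro ⟨x, hx, rfl⟩; positivity
  · intro hy; exact ⟨θ/y, by positivity, by field_simp⟩

lemma my_inv_inj (θ : ℝ) (hθ : 0 < θ) : InjOn (fun x : ℝ => θ/x) (Ioi 0) := by
  intro a ha b hb hab
  have ha' : (0:ℝ) < a := ha
  have hb' : (0:ℝ) < b := hb
  have e : θ / a = θ / b := hab
  rw [div_eq_div_iff ha'.ne' hb'.ne'] at e
  exact (mul_left_cancel₀ hθ.ne' e).symm

lemma inv_subst (θ : ℝ) (hθ : 0 < θ) (g : ℝ → ℝ) :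
    (∫ x in Ioi (0:ℝ), g x) = ∫ x in Ioi (0:ℝ), (θ/x^2) * g (θ/x) := by
  have := integral_image_eq_integral_abs_deriv_smul measurableSet_Ioi
    (fun x hx => inv_deriv θ hx) (my_inv_inj θ hθ) g
  rw [inv_img θ hθ] at this
  rw [this]
  apply setIntegral_congr_fun measurableSet_Ioi
  intro x hx
  have hx' : (0:ℝ) < x := hx
  beta_reduce; rw [smul_eq_mul, abs_neg, abs_of_pos (by positivity)]

lemma B_integrableOn (θ : ℝ) (hθ : 0 < θ) :
    IntegrableOn (fun x : ℝ => (θ/x^2) * Real.exp (-(x - θ/x)^2/2)) (Ioi 0) := by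
  have := (integrableOn_image_iff_integrableOn_abs_deriv_smul measurableSet_Ioi
    (fun x hx => inv_deriv θ hx) (my_inv_inj θ hθ)
    (fun x => Real.exp (-(x - θ/x)^2/2))).mp (by rw [inv_img θ hθ]; exact A_integrableOn θ)
  apply this.congr_fun ?_ measurableSet_Ioi
  intro x hx
  have hx' : (0:ℝ) < x := hx
  have h2 : θ/(θ/x) = x := by field_simp
  beta_reduce; rw [smul_eq_mul, abs_neg, abs_of_pos (by positivity), h2]
  ring_nf

lemma glasser (θ : ℝ) (hθ : 0 ≤ θ) :
    ∫ x in Ioi (0:ℝ), Real.exp (-(x - θ/x)^2/2) = Real.sqrt (2*π) / 2 := by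
  rcases eq_or_lt_of_le hθ with rfl | hθ'
  · have : ∀ x ∈ Ioi (0:ℝ), Real.exp (-(x - 0/x)^2/2) = Real.exp (-(1/2:ℝ) * x^2) := by
      intro x hx; ring_nf
    rw [setIntegral_congr_fun measurableSet_Ioi this, integral_gaussian_Ioi]
    congr 1
    rw [div_div_eq_mul_div, div_one, mul_comm]
  -- θ > 0 case
  set f : ℝ → ℝ := fun x => x - θ/x with hf
  have hderiv : ∀ x ∈ Ioi (0:ℝ), HasDerivWithinAt f (1 + θ/x^2) (Ioi 0) x := by
    intro x hx
    have hx' : (0:ℝ) < x := hx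
    have h1 : HasDerivAt f (1 + θ/x^2) x := by
      have h0 := (hasDerivAt_id x).sub ((hasDerivAt_inv (ne_of_gt hx')).const_mul θ)
      have he : f = fun y : ℝ => id y - θ * y⁻¹ := by
        funext y; simp [hf, div_eq_mul_inv]
      rw [he]
      rw [show 1 + θ/x^2 = 1 - θ * -(x^2)⁻¹ by ring]
      exact h0
    exact h1.hasDerivWithinAt
  have hinj : InjOn f (Ioi 0) := by
    apply StrictMonoOn.injOn
    intro a ha b hb hab
    have ha' : (0:ℝ) < a := ha
    have hb' : (0:ℝ) < b := hb
    have : θ/b < θ/a := by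
      apply div_lt_div_of_pos_left hθ' ha' hab
    simp only [hf]
    linarith
  have himg : f '' Ioi 0 = univ := by
    apply eq_univ_of_forall
    intro u
    set s := Real.sqrt (u^2 + 4*θ) with hs
    have hs2 : s^2 = u^2 + 4*θ := Real.sq_sqrt (by positivity)
    have hsu : -u < s := by
      rcases le_or_gt u 0 with h | h
      · have : u^2 < s^2 := by rw [hs2]; linarith
        nlinarith [Real.sqrt_nonneg (u^2+4*θ)]
      · have : 0 ≤ s := Real.sqrt_nonneg _
        linarith
    have hx : (0:ℝ) < (u + s)/2 := by linarith
    refine ⟨(u+s)/2, hx, ?_⟩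
    simp only [hf]
    have hne : u + s ≠ 0 := ne_of_gt (by linarith)
    field_simp [hne]
    nlinarith [hs2]
  have key := integral_image_eq_integral_abs_deriv_smul measurableSet_Ioi hderiv hinj
    (fun u => Real.exp (-(u^2)/2))
  rw [himg] at key
  have lhs_eq : ∫ u in (univ : Set ℝ), Real.exp (-(u^2)/2) = Real.sqrt (2*π) := by
    rw [setIntegral_univ]
    have : (fun u : ℝ => Real.exp (-(u^2)/2)) = fun u => Real.exp (-(1/2:ℝ) * u^2) := by
      funext u; ring_nf
    rw [this, integral_gaussian]
    congr 1
    rw [div_div_eq_mul_div, div_one, mul_comm]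
  have rhs_eq : (∫ x in Ioi (0:ℝ), |1 + θ/x^2| • Real.exp (-(f x)^2/2))
      = (∫ x in Ioi (0:ℝ), Real.exp (-(x - θ/x)^2/2))
        + ∫ x in Ioi (0:ℝ), (θ/x^2) * Real.exp (-(x - θ/x)^2/2) := by
    rw [← integral_add (A_integrableOn θ) (B_integrableOn θ hθ')]
    apply setIntegral_congr_fun measurableSet_Ioi
    intro x hx
    have hx' : (0:ℝ) < x := hx
    beta_reduce
    rw [smul_eq_mul, abs_of_pos (by positivity)]
    simp only [hf]
    ring
  have hsub : (∫ x in Ioi (0:ℝ), (θ/x^2) * Real.exp (-(x - θ/x)^2/2))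
      = ∫ x in Ioi (0:ℝ), Real.exp (-(x - θ/x)^2/2) := by
    rw [inv_subst θ hθ' (fun x => Real.exp (-(x - θ/x)^2/2))]
    apply setIntegral_congr_fun measurableSet_Ioi
    intro x hx
    have hx' : (0:ℝ) < x := hx
    have h2 : θ/(θ/x) = x := by field_simp
    beta_reduce
    rw [h2]
    ring_nf
  rw [key, rhs_eq, hsub] at lhs_eq
  linarith

lemma key_integral (θ : ℝ) (hθ : 0 ≤ θ) :
    ∫ x in Ioi (0:ℝ), Real.exp (-θ^2/(2*x)) * (x ^ (-(1:ℝ)/2) * Real.exp (-x/2))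
      = Real.sqrt (2*π) * Real.exp (-θ) := by
  have h2 := integral_comp_rpow_Ioi_of_pos
    (g := fun x => Real.exp (-θ^2/(2*x)) * (x ^ (-(1:ℝ)/2) * Real.exp (-x/2)))
    (p := 2) (by norm_num)
  rw [← h2]
  have hcong : ∀ x ∈ Ioi (0:ℝ),
      ((2:ℝ) * x ^ ((2:ℝ)-1)) • (Real.exp (-θ^2/(2*(x ^ (2:ℝ)))) *
        ((x ^ (2:ℝ)) ^ (-(1:ℝ)/2) * Real.exp (-(x ^ (2:ℝ))/2)))
      = (2 * Real.exp (-θ)) * Real.exp (-(x - θ/x)^2/2) := by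
    intro x hx
    have hx' : (0:ℝ) < x := hx
    have hx2 : x ^ (2:ℝ) = x^2 := by
      rw [show (2:ℝ) = ((2:ℕ):ℝ) by norm_num, Real.rpow_natCast]
    have hx1 : x ^ ((2:ℝ)-1) = x := by
      norm_num
    have hxm : (x^2 : ℝ) ^ (-(1:ℝ)/2) = x⁻¹ := by
      rw [← Real.rpow_natCast x 2, ← Real.rpow_mul hx'.le]
      norm_num [Real.rpow_neg_one]
    have hmerge : Real.exp (-θ^2/(2*x^2)) * Real.exp (-(x^2)/2)
        = Real.exp (-θ) * Real.exp (-(x - θ/x)^2/2) := by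
      rw [← Real.exp_add, ← Real.exp_add]
      congr 1
      field_simp
      ring
    rw [smul_eq_mul, hx2, hx1, hxm]
    calc 2 * x * (Real.exp (-θ^2/(2*x^2)) * (x⁻¹ * Real.exp (-(x^2)/2)))
        = (x * x⁻¹) * (2 * (Real.exp (-θ^2/(2*x^2)) * Real.exp (-(x^2)/2))) := by ring
      _ = 2 * (Real.exp (-θ) * Real.exp (-(x - θ/x)^2/2)) := by
          rw [mul_inv_cancel₀ (ne_of_gt hx'), hmerge, one_mul]
      _ = (2 * Real.exp (-θ)) * Real.exp (-(x - θ/x)^2/2) := by ring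
  rw [setIntegral_congr_fun measurableSet_Ioi hcong, MeasureTheory.integral_const_mul,
    glasser θ hθ]
  ring

theorem gamma_mixture_exp (θ : ℝ) (hθ : 0 ≤ θ) :
    ∫ x in Ioi (0 : ℝ),
        Real.exp (-θ ^ 2 / (2 * x)) * ((1 / Real.sqrt (2 * π)) * x ^ (-(1:ℝ)/2) *
          Real.exp (-x / 2))
      = Real.exp (-θ) := by
  have hc : ∀ x ∈ Ioi (0:ℝ),
      Real.exp (-θ ^ 2 / (2 * x)) * ((1 / Real.sqrt (2 * π)) * x ^ (-(1:ℝ)/2) *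
          Real.exp (-x / 2))
      = (1 / Real.sqrt (2 * π)) *
          (Real.exp (-θ^2/(2*x)) * (x ^ (-(1:ℝ)/2) * Real.exp (-x/2))) := by
    intro x hx; ring
  rw [setIntegral_congr_fun measurableSet_Ioi hc, MeasureTheory.integral_const_mul,
    key_integral θ hθ]
  have hs : Real.sqrt (2*π) ≠ 0 := ne_of_gt (Real.sqrt_pos.mpr (by positivity))
  field_simp
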